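/- Monogamy of entanglement: with K_A ⊆ V_A and K_B ⊆ V_B as in the GPT setup, let z ∈ K_A ⊗max K_B and suppose that the marginal y := (id_{V_A} ⊗ e_B)(z) ∈ V_A (via the canonical isomorphism V_A ⊗ ℝ ≅ V_A) is an extreme point of K_A. Then there exists w ∈ K_B such that z = y ⊗ w. -/

import Mathlib

open TensorProduct

/-- The linear functional `f ⊗ g` on `V ⊗ W` induced by linear functionals `f, g`. -/
noncomputable def tensorFunctional {V W : Type*} [AddCommGroup V] [Module ℝ V]
    [AddCommGroup W] [Module ℝ W] (f : V →ₗ[ℝ] ℝ) (g : W →ₗ[ℝ] ℝ) :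
    V ⊗[ℝ] W →ₗ[ℝ] ℝ :=
  TensorProduct.lift ((LinearMap.mul ℝ ℝ).compl₁₂ f g)

/-- The maximal tensor product of two state spaces with unit functionals `eK, eL`. -/
noncomputable def maxTensor {V W : Type*} [AddCommGroup V] [Module ℝ V]
    [AddCommGroup W] [Module ℝ W] (K : Set V) (L : Set W)
    (eK : V →ₗ[ℝ] ℝ) (eL : W →ₗ[ℝ] ℝ) : Set (V ⊗[ℝ] W) :=
  {z | (∀ f : V →ₗ[ℝ] ℝ, ∀ g : W →ₗ[ℝ] ℝ, (∀ x ∈ K, 0 ≤ f x ∧ f x ≤ 1) →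
        (∀ y ∈ L, 0 ≤ g y ∧ g y ≤ 1) → 0 ≤ tensorFunctional f g z) ∧
      tensorFunctional eK eL z = 1}

/-- The partial application `(id ⊗ g)(z) ∈ V` of a functional `g` on `W` to
`z ∈ V ⊗ W`, via the canonical isomorphism `V ⊗ ℝ ≃ V`. -/
noncomputable def partialApply {V W : Type*} [AddCommGroup V] [Module ℝ V]
    [AddCommGroup W] [Module ℝ W] (g : W →ₗ[ℝ] ℝ) : V ⊗[ℝ] W →ₗ[ℝ] V :=
  (TensorProduct.rid ℝ V).toLinearMap ∘ₗ TensorProduct.map LinearMap.id g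

section Aux
variable {V W : Type*} [AddCommGroup V] [Module ℝ V] [AddCommGroup W] [Module ℝ W]

@[simp] lemma tensorFunctional_tmul (f : V →ₗ[ℝ] ℝ) (g : W →ₗ[ℝ] ℝ) (a : V) (b : W) :
    tensorFunctional f g (a ⊗ₜ[ℝ] b) = f a * g b := rfl

@[simp] lemma partialApply_tmul (g : W →ₗ[ℝ] ℝ) (a : V) (b : W) :
    partialApply g (a ⊗ₜ[ℝ] b) = g b • a := by
  simp [partialApply]

lemma tf_eq (f : V →ₗ[ℝ] ℝ) (g : W →ₗ[ℝ] ℝ) (z : V ⊗[ℝ] W) :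
    tensorFunctional f g z = f (partialApply g z) := by
  induction z using TensorProduct.induction_on with
  | zero => simp
  | tmul a b => simp [mul_comm]
  | add x y hx hy => simp [hx, hy]

noncomputable def leftApply (f : V →ₗ[ℝ] ℝ) : V ⊗[ℝ] W →ₗ[ℝ] W :=
  (TensorProduct.lid ℝ W).toLinearMap ∘ₗ TensorProduct.map f LinearMap.id

@[simp] lemma leftApply_tmul (f : V →ₗ[ℝ] ℝ) (a : V) (b : W) :
    leftApply f (a ⊗ₜ[ℝ] b) = f a • b := by simp [leftApply]

lemma tf_eq' (f : V →ₗ[ℝ] ℝ) (g : W →ₗ[ℝ] ℝ) (z : V ⊗[ℝ] W) :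
    tensorFunctional f g z = g (leftApply f z) := by
  induction z using TensorProduct.induction_on with
  | zero => simp
  | tmul a b => simp
  | add x y hx hy => simp [hx, hy]

lemma partialApply_add (g g' : W →ₗ[ℝ] ℝ) (z : V ⊗[ℝ] W) :
    partialApply (g + g') z = partialApply g z + partialApply g' z := by
  induction z using TensorProduct.induction_on with
  | zero => simp
  | tmul a b => simp [add_smul]
  | add x y hx hy =>
      simp only [map_add, hx, hy]; abel

lemma partialApply_smul (c : ℝ) (g : W →ₗ[ℝ] ℝ) (z : V ⊗[ℝ] W) :
    partialApply (c • g) z = c • partialApply g z := by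
  induction z using TensorProduct.induction_on with
  | zero => simp
  | tmul a b => simp [smul_smul]
  | add x y hx hy => simp only [map_add, hx, hy, smul_add]

end Aux

section Sep
variable {V : Type*} [NormedAddCommGroup V] [NormedSpace ℝ V] [FiniteDimensional ℝ V]

/-- Scale a functional nonneg on K into an effect. -/
lemma exists_effect_scale (K : Set V) (hne : K.Nonempty) (hcomp : IsCompact K)
    (f : V →ₗ[ℝ] ℝ) (hf : ∀ k ∈ K, 0 ≤ f k) :
    ∃ c : ℝ, 0 < c ∧ ∀ k ∈ K, 0 ≤ (c • f) k ∧ (c • f) k ≤ 1 := by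
  have hcont : Continuous f := f.continuous_of_finiteDimensional
  obtain ⟨k₀, hk₀, hmax⟩ := hcomp.exists_isMaxOn hne hcont.continuousOn
  refine ⟨(f k₀ + 1)⁻¹, ?_, ?_⟩
  · have : 0 ≤ f k₀ := hf _ hk₀
    positivity
  · intro k hk
    have h1 : 0 ≤ f k := hf _ hk
    have h2 : f k ≤ f k₀ := hmax hk
    have h3 : (0:ℝ) < f k₀ + 1 := by linarith [hf _ hk₀]
    constructor
    · simp only [LinearMap.smul_apply, smul_eq_mul]; positivity
    · simp only [LinearMap.smul_apply, smul_eq_mul]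
      rw [inv_mul_le_iff₀ h3]  -- maybe name differs
      linarith

/-- Key cone lemma. -/
lemma cone_mem (K : Set V) (hne : K.Nonempty) (hcomp : IsCompact K) (hconv : Convex ℝ K)
    (e : V →ₗ[ℝ] ℝ) (he : ∀ k ∈ K, e k = 1)
    (x : V) (hx : ∀ f : V →ₗ[ℝ] ℝ, (∀ k ∈ K, 0 ≤ f k ∧ f k ≤ 1) → 0 ≤ f x) :
    ∃ t : ℝ, ∃ k ∈ K, 0 ≤ t ∧ x = t • k := by
  -- reduce to nonneg functionals
  have hx' : ∀ f : V →ₗ[ℝ] ℝ, (∀ k ∈ K, 0 ≤ f k) → 0 ≤ f x := by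
    intro f hf
    obtain ⟨c, hc, heff⟩ := exists_effect_scale K hne hcomp f hf
    have := hx (c • f) heff
    simp only [LinearMap.smul_apply, smul_eq_mul] at this
    nlinarith
  set C : Set V := {v | ∃ t : ℝ, ∃ k ∈ K, 0 ≤ t ∧ v = t • k} with hC
  obtain ⟨k₀, hk₀⟩ := hne
  have hCconv : Convex ℝ C := by
    rintro v₁ ⟨t₁, k₁, hk₁, ht₁, rfl⟩ v₂ ⟨t₂, k₂, hk₂, ht₂, rfl⟩ a b ha hb hab
    by_cases hs : a * t₁ + b * t₂ = 0
    · have h1 : a * t₁ = 0 := by nlinarith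
      have h2 : b * t₂ = 0 := by nlinarith
      refine ⟨0, k₀, hk₀, le_refl _, ?_⟩
      rw [smul_smul, smul_smul, h1, h2]; simp
    · have hspos : 0 < a * t₁ + b * t₂ := by
        rcases lt_or_eq_of_le (by positivity : (0:ℝ) ≤ a * t₁ + b * t₂) with h | h
        · exact h
        · exact absurd h.symm hs
      refine ⟨a * t₁ + b * t₂, (a * t₁ / (a * t₁ + b * t₂)) • k₁ +
        (b * t₂ / (a * t₁ + b * t₂)) • k₂, ?_, le_of_lt hspos, ?_⟩
      · exact hconv hk₁ hk₂ (by positivity) (by positivity) (by field_simp)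
      · rw [smul_add, smul_smul, smul_smul, smul_smul, smul_smul]
        congr 1 <;> congr 1 <;> field_simp
  have hecont : Continuous e := e.continuous_of_finiteDimensional
  have hCclosed : IsClosed C := by
    refine IsSeqClosed.isClosed ?_
    rintro u v hu hlim
    choose t k hk ht hu' using hu
    obtain ⟨kl, hkl, φ, hφ, hklim⟩ := hcomp.tendsto_subseq hk
    have htval : ∀ n, e (u n) = t n := by
      intro n; rw [hu' n, map_smul, he _ (hk n), smul_eq_mul, mul_one]
    have htlim : Filter.Tendsto t Filter.atTop (nhds (e v)) := by
      have := (hecont.tendsto v).comp hlim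
      simpa only [Function.comp_def, htval] using this
    have htlim' : Filter.Tendsto (t ∘ φ) Filter.atTop (nhds (e v)) :=
      htlim.comp hφ.tendsto_atTop
    have hulim : Filter.Tendsto (u ∘ φ) Filter.atTop (nhds (e v • kl)) := by
      have := htlim'.smul hklim
      simpa only [Function.comp_def, ← hu'] using this
    have hulim2 : Filter.Tendsto (u ∘ φ) Filter.atTop (nhds v) :=
      hlim.comp hφ.tendsto_atTop
    have hveq : v = e v • kl := tendsto_nhds_unique hulim2 hulim
    have hpos : 0 ≤ e v := ge_of_tendsto' htlim ht
    exact ⟨e v, kl, hkl, hpos, hveq⟩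
  by_contra hxC
  push_neg at hxC
  have hxC' : x ∉ C := by
    intro ⟨t, k, hk, ht, hxe⟩; exact hxC t k hk ht hxe
  obtain ⟨f, u, hfx, hfC⟩ := geometric_hahn_banach_point_closed hCconv hCclosed hxC'
  have h0C : (0:V) ∈ C := ⟨0, k₀, hk₀, le_refl _, by simp⟩
  have hu0 : u < 0 := by simpa using hfC 0 h0C
  have hfK : ∀ k ∈ K, 0 ≤ f k := by
    intro k hk
    by_contra hneg
    push_neg at hneg
    have htpos : 0 < 2 * u / f k := div_pos_of_neg_of_neg (by linarith) hneg
    have hmem : (2 * u / f k) • k ∈ C := ⟨_, k, hk, le_of_lt htpos, rfl⟩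
    have := hfC _ hmem
    rw [map_smul, smul_eq_mul, div_mul_cancel₀ _ (ne_of_lt hneg)] at this
    linarith
  have := hx' f.toLinearMap hfK
  simp only [ContinuousLinearMap.coe_coe] at this
  linarith

/-- Every functional is in the span of effects. -/
lemma mem_span_effects (K : Set V) (hne : K.Nonempty) (hcomp : IsCompact K)
    (e : V →ₗ[ℝ] ℝ) (he : ∀ k ∈ K, e k = 1) (g : V →ₗ[ℝ] ℝ) :
    g ∈ Submodule.span ℝ {f : V →ₗ[ℝ] ℝ | ∀ k ∈ K, 0 ≤ f k ∧ f k ≤ 1} := by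
  have hcont : Continuous g := g.continuous_of_finiteDimensional
  obtain ⟨k₁, hk₁, hmin⟩ := hcomp.exists_isMinOn hne hcont.continuousOn
  set c : ℝ := max (-(g k₁)) 0 with hc
  have hc0 : 0 ≤ c := le_max_right _ _
  set h : V →ₗ[ℝ] ℝ := g + c • e with hh
  have hhK : ∀ k ∈ K, 0 ≤ h k := by
    intro k hk
    have h1 : g k₁ ≤ g k := hmin hk
    have : -(g k) ≤ c := le_trans (by linarith) (le_max_left _ _)
    simp only [hh, LinearMap.add_apply, LinearMap.smul_apply, smul_eq_mul, he k hk, mul_one]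
    linarith
  obtain ⟨d, hd, heff⟩ := exists_effect_scale K hne hcomp h hhK
  have hEmem : (d • h) ∈ {f : V →ₗ[ℝ] ℝ | ∀ k ∈ K, 0 ≤ f k ∧ f k ≤ 1} := heff
  have heMem : e ∈ {f : V →ₗ[ℝ] ℝ | ∀ k ∈ K, 0 ≤ f k ∧ f k ≤ 1} := by
    intro k hk; rw [he k hk]; exact ⟨zero_le_one, le_refl 1⟩
  have : g = d⁻¹ • (d • h) - c • e := by
    rw [smul_smul, inv_mul_cancel₀ (ne_of_gt hd), one_smul, hh]; abel
  rw [this]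
  exact Submodule.sub_mem _
    (Submodule.smul_mem _ _ (Submodule.subset_span hEmem))
    (Submodule.smul_mem _ _ (Submodule.subset_span heMem))

end Sep

section Tensor
variable {V W : Type*} [NormedAddCommGroup V] [NormedSpace ℝ V] [FiniteDimensional ℝ V]
  [NormedAddCommGroup W] [NormedSpace ℝ W] [FiniteDimensional ℝ W]

lemma dualDistrib_eq_tf (f : V →ₗ[ℝ] ℝ) (g : W →ₗ[ℝ] ℝ) :
    TensorProduct.dualDistrib ℝ V W (f ⊗ₜ[ℝ] g) = tensorFunctional f g := by
  apply TensorProduct.ext'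
  intro a b
  simp [TensorProduct.dualDistrib_apply]

lemma tensor_eq_zero (d : V ⊗[ℝ] W)
    (h : ∀ (f : V →ₗ[ℝ] ℝ) (g : W →ₗ[ℝ] ℝ), tensorFunctional f g d = 0) : d = 0 := by
  rw [← Module.forall_dual_apply_eq_zero_iff ℝ d]
  intro φ
  obtain ⟨ψ, rfl⟩ := (TensorProduct.dualDistribEquiv ℝ V W).surjective φ
  have hcoe : ∀ ψ' : Module.Dual ℝ V ⊗[ℝ] Module.Dual ℝ W,
      (TensorProduct.dualDistribEquiv ℝ V W) ψ' = TensorProduct.dualDistrib ℝ V W ψ' := by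
    intro ψ'
    simp [TensorProduct.dualDistribEquiv, TensorProduct.dualDistribEquivOfBasis]
  rw [hcoe]
  induction ψ using TensorProduct.induction_on with
  | zero => simp
  | tmul f g => rw [dualDistrib_eq_tf]; exact h f g
  | add x y hx hy => rw [map_add, LinearMap.add_apply, hx, hy, add_zero]

end Tensor

lemma partialApply_zero {V W : Type*} [AddCommGroup V] [Module ℝ V] [AddCommGroup W]
    [Module ℝ W] (z : V ⊗[ℝ] W) : partialApply (0 : W →ₗ[ℝ] ℝ) z = 0 := by
  have := partialApply_smul (0:ℝ) 0 z
  simpa using this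


/-- monogamy of entanglement: if the marginal of a bipartite state `z`
in the maximal tensor product is an extreme point `y` of `K_A`, then `z = y ⊗ w` for
some `w ∈ K_B`. -/
theorem monogamy_of_entanglement
    {VA VB : Type*} [NormedAddCommGroup VA] [NormedSpace ℝ VA] [FiniteDimensional ℝ VA]
    [NormedAddCommGroup VB] [NormedSpace ℝ VB] [FiniteDimensional ℝ VB]
    (KA : Set VA) (KB : Set VB)
    (hneA : KA.Nonempty) (hcompA : IsCompact KA) (hconvA : Convex ℝ KA)
    (hneB : KB.Nonempty) (hcompB : IsCompact KB) (hconvB : Convex ℝ KB)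
    (hspanA : Submodule.span ℝ KA = ⊤) (hspanB : Submodule.span ℝ KB = ⊤)
    (eA : VA →ₗ[ℝ] ℝ) (eB : VB →ₗ[ℝ] ℝ)
    (heA : ∀ x ∈ KA, eA x = 1) (heB : ∀ y ∈ KB, eB y = 1)
    (z : VA ⊗[ℝ] VB) (hz : z ∈ maxTensor KA KB eA eB)
    (hext : partialApply eB z ∈ Set.extremePoints ℝ KA) :
    ∃ w ∈ KB, z = (partialApply eB z) ⊗ₜ[ℝ] w := by
  obtain ⟨hzpos, hznorm⟩ := hz
  set y := partialApply eB z with hy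
  have heAeff : ∀ x ∈ KA, 0 ≤ eA x ∧ eA x ≤ 1 := fun x hx => by
    rw [heA x hx]; exact ⟨zero_le_one, le_refl 1⟩
  have heBeff : ∀ k ∈ KB, 0 ≤ eB k ∧ eB k ≤ 1 := fun k hk => by
    rw [heB k hk]; exact ⟨zero_le_one, le_refl 1⟩
  have hyK : y ∈ KA := hext.1
  have heAy : eA y = 1 := by rw [hy, ← tf_eq]; exact hznorm
  set w := leftApply eA z with hw
  have hgw : ∀ g : VB →ₗ[ℝ] ℝ, g w = eA (partialApply g z) := by
    intro g; rw [hw, ← tf_eq' eA g z, tf_eq]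
  have hwK : w ∈ KB := by
    obtain ⟨t, k, hk, ht, hwe⟩ := cone_mem KB hneB hcompB hconvB eB heB w
      (fun g hg => by rw [hw, ← tf_eq' eA g z]; exact hzpos eA g heAeff hg)
    have hebw : eB w = 1 := by rw [hw, ← tf_eq' eA eB z]; exact hznorm
    rw [hwe, map_smul, heB k hk, smul_eq_mul, mul_one] at hebw
    rw [hwe, hebw, one_smul]; exact hk
  have hkey : ∀ g : VB →ₗ[ℝ] ℝ, (∀ k ∈ KB, 0 ≤ g k ∧ g k ≤ 1) →
      partialApply g z = (g w) • y := by
    intro g hg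
    set xg := partialApply g z with hxg
    have hgeff' : ∀ k ∈ KB, 0 ≤ (eB - g) k ∧ (eB - g) k ≤ 1 := by
      intro k hk
      simp only [LinearMap.sub_apply, heB k hk]
      constructor <;> linarith [(hg k hk).1, (hg k hk).2]
    obtain ⟨t, k, hk, ht, hxe⟩ := cone_mem KA hneA hcompA hconvA eA heA xg
      (fun f hf => by rw [hxg, ← tf_eq]; exact hzpos f g hf hg)
    obtain ⟨s, k', hk', hs, hxe'⟩ := cone_mem KA hneA hcompA hconvA eA heA
      (partialApply (eB - g) z)
      (fun f hf => by rw [← tf_eq]; exact hzpos f (eB - g) hf hgeff')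
    have hge : g + (eB - g) = eB := by abel
    have hsum : xg + partialApply (eB - g) z = y := by
      rw [hxg, hy, ← partialApply_add, hge]
    have hteq : eA xg = t := by rw [hxe, map_smul, heA k hk, smul_eq_mul, mul_one]
    have hseq : eA (partialApply (eB - g) z) = s := by
      rw [hxe', map_smul, heA k' hk', smul_eq_mul, mul_one]
    have hts : t + s = 1 := by
      have h2 := congrArg eA hsum; rw [map_add, hteq, hseq, heAy] at h2; exact h2
    have hgww : g w = t := by rw [hgw g, ← hxg, hteq]
    rcases eq_or_lt_of_le ht with h0 | htpos
    · rw [hgww, ← h0, zero_smul, hxe, ← h0, zero_smul]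
    · rcases eq_or_lt_of_le hs with h0' | hspos
      · have hxg0 : partialApply (eB - g) z = 0 := by rw [hxe', ← h0', zero_smul]
        have hxy : xg = y := by rw [← hsum, hxg0, add_zero]
        have ht1 : t = 1 := by linarith
        rw [hgww, hxy, ht1, one_smul]
      · have hseg : y ∈ openSegment ℝ k k' :=
          ⟨t, s, htpos, hspos, hts, by rw [← hsum, hxe, hxe']⟩
        obtain ⟨hk_eq, _⟩ := (mem_extremePoints.mp hext).2 k hk k' hk' hseg
        rw [hgww, hxe, hk_eq]
  refine ⟨w, hwK, ?_⟩
  have hdiff : z - y ⊗ₜ[ℝ] w = 0 := by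
    apply tensor_eq_zero
    intro f g
    rw [map_sub, tensorFunctional_tmul]
    have hS : ∀ g' ∈ Submodule.span ℝ {h : VB →ₗ[ℝ] ℝ | ∀ k ∈ KB, 0 ≤ h k ∧ h k ≤ 1},
        tensorFunctional f g' z = f y * g' w := by
      intro g' hg'
      induction hg' using Submodule.span_induction with
      | mem g' hg' =>
          rw [tf_eq, hkey g' hg', map_smul, smul_eq_mul, mul_comm]
      | zero => simp [tf_eq, partialApply_zero]
      | add g₁ g₂ h₁ h₂ ih₁ ih₂ =>
          rw [tf_eq, partialApply_add, map_add, ← tf_eq, ← tf_eq, ih₁, ih₂,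
            LinearMap.add_apply]
          ring
      | smul c g₁ h₁ ih₁ =>
          rw [tf_eq, partialApply_smul, map_smul, smul_eq_mul, ← tf_eq, ih₁,
            LinearMap.smul_apply, smul_eq_mul]
          ring
    rw [hS g (mem_span_effects KB hneB hcompB eB heB g)]
    ring
  exact sub_eq_zero.mp hdiff
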